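/- Theorem (moment dynamics): Let ρ_t solve dρ_t/dt = 𝓛(ρ_t) with 𝓛(ρ) = Σ_k λ_k(U_k ρ U_k† - ρ), λ_k > 0, U_k = e^{-(i/2)𝔠^T H_k 𝔠}, H_k = -H_k^T = -H̃_k. Then the M-th order moments ⟨⊗_{m=1}^M 𝔠⟩_t := tr(ρ_t ⊗_{m=1}^M 𝔠) evolve linearly: ⟨⊗_{m=1}^M 𝔠⟩_t = e^{t Σ_k λ_k(⊗_{m=1}^M O_k - I_{(2n)^M})} ⟨⊗_{m=1}^M 𝔠⟩_0, where O_k = e^{-iEH_k}. -/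

import Mathlib

open Matrix BigOperators

attribute [local instance] Matrix.normedAddCommGroup Matrix.normedSpace

instance Matrix.clmIsTopologicalRing (m : Type*) [Fintype m] :
    IsTopologicalRing (Matrix m m ℂ →L[ℂ] Matrix m m ℂ) :=
  @NonUnitalSeminormedRing.toIsTopologicalRing _
    (@SeminormedRing.toNonUnitalSeminormedRing _
      (@NormedRing.toSeminormedRing _ ContinuousLinearMap.toNormedRing))

noncomputable def Emat (n : ℕ) : Matrix (Fin n ⊕ Fin n) (Fin n ⊕ Fin n) ℂ :=
  Matrix.fromBlocks 0 1 1 0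

noncomputable def quadForm (n : ℕ) (c : Fin n ⊕ Fin n → Matrix (Fin (2^n)) (Fin (2^n)) ℂ)
    (H : Matrix (Fin n ⊕ Fin n) (Fin n ⊕ Fin n) ℂ) : Matrix (Fin (2^n)) (Fin (2^n)) ℂ :=
  ∑ j, ∑ k, H j k • (c j * c k)

noncomputable def cTensor (n M : ℕ) (c : Fin n ⊕ Fin n → Matrix (Fin (2^n)) (Fin (2^n)) ℂ)
    (J : Fin M → Fin n ⊕ Fin n) : Matrix (Fin (2^n)) (Fin (2^n)) ℂ :=
  (List.ofFn fun m => c (J m)).prod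

noncomputable def kronPow (n M : ℕ) (O : Matrix (Fin n ⊕ Fin n) (Fin n ⊕ Fin n) ℂ) :
    Matrix (Fin M → Fin n ⊕ Fin n) (Fin M → Fin n ⊕ Fin n) ℂ :=
  fun J J' => ∏ m, O (J m) (J' m)


open NormedSpace

set_option linter.unusedSectionVars false
set_option maxHeartbeats 1000000
set_option synthInstance.maxHeartbeats 400000

section Banach
variable {A : Type*} [NormedRing A] [NormedAlgebra ℂ A] [CompleteSpace A]

lemma hasSum_exp (x : A) :
    HasSum (fun n : ℕ => ((n.factorial : ℂ))⁻¹ • x ^ n) (exp x) := by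
  have h2 : exp x = ∑' n : ℕ, ((n.factorial : ℂ))⁻¹ • x ^ n := by
    rw [exp_eq_tsum ℂ]
  rw [h2]
  exact (expSeries_summable' (𝕂 := ℂ) x).hasSum

end Banach

section MatExp
variable {ι : Type*} [Fintype ι] [DecidableEq ι]

lemma hasSum_exp_mat (B : Matrix ι ι ℂ) :
    HasSum (fun n : ℕ => ((n.factorial : ℂ))⁻¹ • B ^ n) (exp B) := by
  letI : NormedRing (Matrix ι ι ℂ) := Matrix.linftyOpNormedRing
  letI : NormedAlgebra ℂ (Matrix ι ι ℂ) := Matrix.linftyOpNormedAlgebra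
  have h := @hasSum_exp (Matrix ι ι ℂ) Matrix.linftyOpNormedRing Matrix.linftyOpNormedAlgebra
    (FiniteDimensional.complete ℂ _) B
  exact h

lemma hasSum_exp_mat_op (B : Matrix ι ι ℂ) :
    HasSum (fun n : ℕ => ((n.factorial : ℂ))⁻¹ • (MulOpposite.op B) ^ n)
      (MulOpposite.op (exp B)) := by
  have h := (hasSum_exp_mat B).op
  simpa only [MulOpposite.op_smul, MulOpposite.op_pow] using h

lemma map_exp_of_hasSum {𝔸 𝔹 : Type*} [Ring 𝔸] [Module ℂ 𝔸] [TopologicalSpace 𝔸]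
    [NormedRing 𝔹] [NormedAlgebra ℂ 𝔹] [CompleteSpace 𝔹]
    {F : Type*} [FunLike F 𝔸 𝔹] [RingHomClass F 𝔸 𝔹] (f : F) (hf : Continuous f) (x y : 𝔸)
    (hx : HasSum (fun n : ℕ => ((n.factorial : ℂ))⁻¹ • x ^ n) y) : f y = exp (f x) := by
  have h1 := hx.map f hf
  refine h1.unique ?_
  convert hasSum_exp (f x) using 1
  funext n
  simp only [Function.comp_apply, map_inv_natCast_smul f ℂ ℂ, map_pow]

lemma exp_add_clm {V : Type*} [NormedAddCommGroup V] [NormedSpace ℂ V] [CompleteSpace V]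
    {T S : V →L[ℂ] V} (h : Commute T S) : exp (T + S) = exp T * exp S :=
  exp_add_of_commute_of_mem_ball (𝕂 := ℂ) h ((expSeries_radius_eq_top ℂ (V →L[ℂ] V)).symm ▸ edist_lt_top _ _) ((expSeries_radius_eq_top ℂ (V →L[ℂ] V)).symm ▸ edist_lt_top _ _)

lemma map_exp_clm {𝔸 V : Type*} [Ring 𝔸] [Module ℂ 𝔸] [TopologicalSpace 𝔸]
    [NormedAddCommGroup V] [NormedSpace ℂ V] [CompleteSpace V]
    {F : Type*} [FunLike F 𝔸 (V →L[ℂ] V)] [RingHomClass F 𝔸 (V →L[ℂ] V)] (f : F)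
    (hf : Continuous f) (x y : 𝔸)
    (hx : HasSum (fun n : ℕ => ((n.factorial : ℂ))⁻¹ • x ^ n) y) : f y = exp (f x) :=
  map_exp_of_hasSum f hf x y hx

end MatExp

section Generic
variable {V W : Type*} [NormedAddCommGroup V] [NormedSpace ℂ V] [CompleteSpace V]
  [NormedAddCommGroup W] [NormedSpace ℂ W] [CompleteSpace W]

lemma hasSum_exp_apply (T : V →L[ℂ] V) (v : V) :
    HasSum (fun n : ℕ => ((n.factorial : ℂ))⁻¹ • (T ^ n) v) (exp T v) := by
  have h : HasSum (fun n : ℕ => ((n.factorial : ℂ))⁻¹ • T ^ n) (exp T) := by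
    have h2 : exp T = ∑' n : ℕ, ((n.factorial : ℂ))⁻¹ • T ^ n := by
      rw [exp_eq_tsum ℂ]
    rw [h2]
    exact (expSeries_summable' (𝕂 := ℂ) T).hasSum
  have h3 := (ContinuousLinearMap.apply ℂ V v).hasSum h
  simpa using h3

lemma exp_apply_intertwine (Φ : V →L[ℂ] W) (T : V →L[ℂ] V) (S : W →L[ℂ] W)
    (h : ∀ v, Φ (T v) = S (Φ v)) (v : V) : Φ (exp T v) = exp S (Φ v) := by
  have hn : ∀ (m : ℕ) (v : V), Φ ((T ^ m) v) = (S ^ m) (Φ v) := by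
    intro m
    induction m with
    | zero => intro v; simp
    | succ m ih =>
      intro v
      rw [pow_succ, pow_succ, ContinuousLinearMap.mul_apply, ContinuousLinearMap.mul_apply,
        ih, h]
  have h1 := Φ.hasSum (hasSum_exp_apply T v)
  simp only [_root_.map_smul, hn] at h1
  exact h1.unique (hasSum_exp_apply S (Φ v))

lemma exp_apply_eq_of_commute (T S : V →L[ℂ] V) (hc : Commute T S) (v : V)
    (h : T v = S v) : exp T v = exp S v := by
  have hn : ∀ m : ℕ, (T ^ m) v = (S ^ m) v := by
    intro m
    induction m with
    | zero => rfl
    | succ m ih =>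
      have h1 : (T ^ (m+1)) v = (T ^ m) (T v) := by
        rw [pow_succ, ContinuousLinearMap.mul_apply]
      have h2 : (T ^ m) (S v) = S ((T ^ m) v) := by
        have := (hc.symm.pow_right m).eq
        calc (T ^ m) (S v) = (T ^ m * S) v := rfl
          _ = (S * T ^ m) v := by rw [this]
          _ = S ((T ^ m) v) := rfl
      rw [h1, h, h2, ih, ← ContinuousLinearMap.mul_apply, ← pow_succ']
  have h1 := hasSum_exp_apply T v
  simp only [hn] at h1
  exact h1.unique (hasSum_exp_apply S v)

end Generic

section MatAct
variable {ι : Type*} [Fintype ι] [DecidableEq ι]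
variable {V : Type*} [NormedAddCommGroup V] [NormedSpace ℂ V] [FiniteDimensional ℂ V]

/-- Matrix acting on `V`-valued vectors, as a linear map. -/
noncomputable def matActFun (B : Matrix ι ι ℂ) : (ι → V) →ₗ[ℂ] (ι → V) where
  toFun w i := ∑ j, B i j • w j
  map_add' w u := by
    funext i
    simp [smul_add, Finset.sum_add_distrib]
  map_smul' a w := by
    funext i
    simp [Finset.smul_sum, smul_comm a]

/-- Matrix acting on `V`-valued vectors, as a continuous linear map. -/
noncomputable def matAct (B : Matrix ι ι ℂ) : (ι → V) →L[ℂ] (ι → V) :=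
  LinearMap.toContinuousLinearMap (matActFun B)

@[simp] lemma matAct_apply (B : Matrix ι ι ℂ) (w : ι → V) (i : ι) :
    matAct B w i = ∑ j, B i j • w j := rfl

noncomputable def matActHom : Matrix ι ι ℂ →+* ((ι → V) →L[ℂ] (ι → V)) where
  toFun := matAct
  map_one' := by
    ext w i
    simp [Matrix.one_apply, ite_smul]
  map_mul' A B := by
    ext w i
    simp only [matAct_apply, ContinuousLinearMap.mul_apply, Matrix.mul_apply,
      Finset.sum_smul, smul_smul, Finset.smul_sum]
    rw [Finset.sum_comm]
  map_zero' := by ext w i; simp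
  map_add' A B := by
    ext w i
    simp [Matrix.add_apply, add_smul, Finset.sum_add_distrib]

@[simp] lemma matActHom_apply (B : Matrix ι ι ℂ) (w : ι → V) (i : ι) :
    (matActHom B : (ι → V) →L[ℂ] (ι → V)) w i = ∑ j, B i j • w j := rfl

noncomputable def matActLin : Matrix ι ι ℂ →ₗ[ℂ] ((ι → V) →L[ℂ] (ι → V)) where
  toFun := matAct
  map_add' A B := by ext w i; simp [Matrix.add_apply, add_smul, Finset.sum_add_distrib]
  map_smul' a A := by ext w i; simp [Matrix.smul_apply, smul_smul, Finset.smul_sum]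

lemma matAct_smul (a : ℂ) (B : Matrix ι ι ℂ) :
    (matAct (a • B) : (ι → V) →L[ℂ] (ι → V)) = a • matAct B :=
  matActLin.map_smul a B

lemma matAct_continuous :
    Continuous (matActHom : Matrix ι ι ℂ →+* ((ι → V) →L[ℂ] (ι → V))) :=
  (matActLin (ι := ι) (V := V)).continuous_of_finiteDimensional

attribute [local instance] Matrix.normedAddCommGroup Matrix.normedSpace

lemma exp_matAct (B : Matrix ι ι ℂ) :
    exp (matAct B : (ι → V) →L[ℂ] (ι → V)) = matAct (exp B) := by
  exact (map_exp_of_hasSum matActHom matAct_continuous B _ (hasSum_exp_mat B)).symm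

end MatAct

section Entries
variable {ι : Type*} [Fintype ι] [DecidableEq ι]
variable {V : Type*} [NormedAddCommGroup V] [NormedSpace ℂ V]

lemma hasSum_exp_entries (B : Matrix ι ι ℂ) (v : ι → V) (j : ι) :
    HasSum (fun n : ℕ => ((n.factorial : ℂ))⁻¹ • ∑ j', ((B ^ n) j j') • v j')
      (∑ j', ((exp B) j j') • v j') := by
  have hΦ : ∃ Φ : Matrix ι ι ℂ →ₗ[ℂ] V, (∀ C, Φ C = ∑ j', (C j j') • v j') := by
    refine ⟨{ toFun := fun C => ∑ j', (C j j') • v j', map_add' := ?_, map_smul' := ?_ },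
      fun C => rfl⟩
    · intro C D
      simp [Matrix.add_apply, add_smul, Finset.sum_add_distrib]
    · intro a C
      simp [Matrix.smul_apply, smul_smul, Finset.smul_sum]
  obtain ⟨Φ, hΦ⟩ := hΦ
  have hcont : Continuous Φ := Φ.continuous_of_finiteDimensional
  have h := (hasSum_exp_mat B).map Φ.toAddMonoidHom hcont
  simp only [LinearMap.toAddMonoidHom_coe, Function.comp_def, hΦ] at h
  have he : ∀ n : ℕ, ∑ j', (((n.factorial : ℂ))⁻¹ • B ^ n) j j' • v j'
      = ((n.factorial : ℂ))⁻¹ • ∑ j', ((B ^ n) j j') • v j' := by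
    intro n
    rw [Finset.smul_sum]
    exact Finset.sum_congr rfl fun j' _ => by rw [Matrix.smul_apply, smul_eq_mul, mul_smul]
  simpa only [he] using h

end Entries

section Conj
variable {m : Type*} [Fintype m] [DecidableEq m]

noncomputable def mulLc (X : Matrix m m ℂ) : Matrix m m ℂ →L[ℂ] Matrix m m ℂ :=
  LinearMap.toContinuousLinearMap (LinearMap.mulLeft ℂ X)

noncomputable def mulRc (X : Matrix m m ℂ) : Matrix m m ℂ →L[ℂ] Matrix m m ℂ :=
  LinearMap.toContinuousLinearMap (LinearMap.mulRight ℂ X)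

@[simp] lemma mulLc_apply (X a : Matrix m m ℂ) : mulLc X a = X * a := rfl
@[simp] lemma mulRc_apply (X a : Matrix m m ℂ) : mulRc X a = a * X := rfl

/-- `a ↦ a * X - X * a` as a continuous linear map. -/
noncomputable def adRf (X : Matrix m m ℂ) : Matrix m m ℂ →L[ℂ] Matrix m m ℂ :=
  mulRc X - mulLc X

@[simp] lemma adRf_apply (X a : Matrix m m ℂ) : adRf X a = a * X - X * a := rfl

noncomputable def mulLHom : Matrix m m ℂ →+* (Matrix m m ℂ →L[ℂ] Matrix m m ℂ) where
  toFun := mulLc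
  map_one' := by ext a; simp
  map_mul' x y := by ext a; simp [mul_assoc]
  map_zero' := by ext a; simp
  map_add' x y := by ext a; simp [add_mul]

noncomputable def mulRHom : (Matrix m m ℂ)ᵐᵒᵖ →+* (Matrix m m ℂ →L[ℂ] Matrix m m ℂ) where
  toFun X := mulRc X.unop
  map_one' := by ext a; simp
  map_mul' x y := by ext a; simp [mul_assoc]
  map_zero' := by ext a; simp
  map_add' x y := by ext a; simp [mul_add]

noncomputable def mulLlin : Matrix m m ℂ →ₗ[ℂ] (Matrix m m ℂ →L[ℂ] Matrix m m ℂ) where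
  toFun := mulLc
  map_add' x y := by ext a; simp [add_mul]
  map_smul' r x := by ext a; simp [smul_mul_assoc]

noncomputable def mulRlin : Matrix m m ℂ →ₗ[ℂ] (Matrix m m ℂ →L[ℂ] Matrix m m ℂ) where
  toFun := mulRc
  map_add' x y := by ext a; simp [mul_add]
  map_smul' r x := by ext a; simp [mul_smul_comm]

lemma exp_adRf_apply (X a : Matrix m m ℂ) :
    exp (adRf X) a = exp (-X) * a * exp X := by
  have hcl : Continuous (mulLHom (m := m)) :=
    (mulLlin (m := m)).continuous_of_finiteDimensional
  have hcr : Continuous (mulRHom (m := m)) :=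
    ((mulRlin (m := m)).continuous_of_finiteDimensional).comp MulOpposite.continuous_unop
  have hsplit : adRf X = mulRHom (MulOpposite.op X) + mulLHom (-X) := by
    ext a
    simp [adRf, mulRHom, mulLHom, sub_eq_add_neg]
  have hcomm : Commute (mulRHom (MulOpposite.op X) : Matrix m m ℂ →L[ℂ] Matrix m m ℂ)
      (mulLHom (-X)) := by
    ext a
    simp [mulRHom, mulLHom, mul_assoc]
  have h1 : exp (mulLHom (-X) : Matrix m m ℂ →L[ℂ] Matrix m m ℂ)
      = mulLHom (exp (-X)) := (map_exp_clm mulLHom hcl (-X) _ (hasSum_exp_mat (-X))).symm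
  have h2 : exp (mulRHom (MulOpposite.op X) : Matrix m m ℂ →L[ℂ] Matrix m m ℂ)
      = mulRHom (MulOpposite.op (exp X)) := by
    exact (map_exp_clm mulRHom hcr (MulOpposite.op X) _ (hasSum_exp_mat_op X)).symm
  rw [hsplit, show exp (mulRHom (MulOpposite.op X) + mulLHom (-X) : Matrix m m ℂ →L[ℂ] Matrix m m ℂ)
      = exp (mulRHom (MulOpposite.op X) : Matrix m m ℂ →L[ℂ] Matrix m m ℂ) * exp (mulLHom (-X))
      from exp_add_clm hcomm, h1, h2]
  simp [mulRHom, mulLHom, mul_assoc]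

end Conj

lemma Emat_apply (n : ℕ) (j k : Fin n ⊕ Fin n) :
    Emat n j k = if k = Sum.swap j then 1 else 0 := by
  rcases j with j | j <;> rcases k with k | k <;>
    simp [Emat, Matrix.fromBlocks, Matrix.one_apply, eq_comm]

lemma Emat_symm (n : ℕ) (j k : Fin n ⊕ Fin n) : Emat n j k = Emat n k j := by
  rcases j with j | j <;> rcases k with k | k <;>
    simp [Emat_apply, eq_comm]

lemma EME_apply (n : ℕ) (M : Matrix (Fin n ⊕ Fin n) (Fin n ⊕ Fin n) ℂ)
    (p q : Fin n ⊕ Fin n) :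
    (Emat n * M * Emat n) p q = M (Sum.swap p) (Sum.swap q) := by
  rcases p with p | p <;> rcases q with q | q <;>
    simp [Matrix.mul_apply, Emat_apply, Finset.sum_ite_eq', Fintype.sum_sum_type]


section Ferm
variable (n : ℕ) (c : Fin n ⊕ Fin n → Matrix (Fin (2^n)) (Fin (2^n)) ℂ)

lemma triple_comm
    (hCAR : ∀ j k, c j * c k + c k * c j = Emat n j k • (1 : Matrix (Fin (2^n)) (Fin (2^n)) ℂ))
    (a b j : Fin n ⊕ Fin n) :
    c a * c b * c j - c j * (c a * c b) = Emat n b j • c a - Emat n a j • c b := by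
  have hbj : c b * c j = Emat n b j • 1 - c j * c b := eq_sub_of_add_eq (hCAR b j)
  have haj : c a * c j = Emat n a j • 1 - c j * c a := eq_sub_of_add_eq (hCAR a j)
  rw [mul_assoc, hbj, mul_sub, mul_smul_comm, mul_one, ← mul_assoc, haj, sub_mul,
    smul_mul_assoc, one_mul, mul_assoc]
  abel

lemma quad_bracket
    (hCAR : ∀ j k, c j * c k + c k * c j = Emat n j k • (1 : Matrix (Fin (2^n)) (Fin (2^n)) ℂ))
    (Hk : Matrix (Fin n ⊕ Fin n) (Fin n ⊕ Fin n) ℂ) (hanti : Hk = -Hkᵀ)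
    (j : Fin n ⊕ Fin n) :
    quadForm n c Hk * c j - c j * quadForm n c Hk
      = ∑ a, (2 * ∑ b, Hk a b * Emat n b j) • c a := by
  have hH : ∀ a b, Hk a b = -Hk b a := by
    intro a b
    conv_lhs => rw [hanti]
    simp
  have h1 : quadForm n c Hk * c j - c j * quadForm n c Hk
      = ∑ a, ∑ b, Hk a b • (c a * c b * c j - c j * (c a * c b)) := by
    simp only [quadForm, Finset.sum_mul, Finset.mul_sum, smul_mul_assoc, mul_smul_comm,
      smul_sub, Finset.sum_sub_distrib]
  rw [h1]
  have h2 : ∀ a b, Hk a b • (c a * c b * c j - c j * (c a * c b))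
      = (Hk a b * Emat n b j) • c a - (Hk a b * Emat n a j) • c b := by
    intro a b
    rw [triple_comm n c hCAR a b j, smul_sub, smul_smul, smul_smul]
  simp only [h2, Finset.sum_sub_distrib]
  have h3 : ∑ a, ∑ b, (Hk a b * Emat n a j) • c b
      = ∑ a, (∑ b, -(Hk a b * Emat n b j)) • c a := by
    rw [Finset.sum_comm]
    congr 1
    funext b
    rw [Finset.sum_smul]
    congr 1
    funext a
    rw [hH a b]
    ring_nf
  rw [h3]
  rw [← Finset.sum_sub_distrib]
  congr 1
  funext a
  rw [← Finset.sum_smul, ← sub_smul]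
  congr 1
  rw [Finset.mul_sum, ← Finset.sum_sub_distrib]
  congr 1
  funext b
  ring

lemma quad_herm
    (hadj : ∀ j, (c j)ᴴ = c (Sum.swap j))
    (Hk : Matrix (Fin n ⊕ Fin n) (Fin n ⊕ Fin n) ℂ) (hanti : Hk = -Hkᵀ)
    (htilde : Emat n * Hk.map (starRingEnd ℂ) * Emat n = -Hk) :
    (quadForm n c Hk)ᴴ = quadForm n c Hk := by
  have hent : ∀ j k, (starRingEnd ℂ) (Hk j k) = -Hk (Sum.swap j) (Sum.swap k) := by
    intro j k
    have h := congrFun (congrFun htilde (Sum.swap j)) (Sum.swap k)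
    rw [EME_apply] at h
    simpa using h
  have hH : ∀ a b, Hk a b = -Hk b a := by
    intro a b; conv_lhs => rw [hanti]
    simp
  have h1 : (quadForm n c Hk)ᴴ
      = ∑ j, ∑ k, (starRingEnd ℂ) (Hk j k) • (c (Sum.swap k) * c (Sum.swap j)) := by
    simp [quadForm, Matrix.conjTranspose_sum, Matrix.conjTranspose_smul,
      Matrix.conjTranspose_mul, hadj]
  rw [h1]
  have h2 : ∀ j k, (starRingEnd ℂ) (Hk j k) • (c (Sum.swap k) * c (Sum.swap j))
      = -Hk (Sum.swap j) (Sum.swap k) • (c (Sum.swap k) * c (Sum.swap j)) := by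
    intro j k; rw [hent]
  simp only [h2]
  calc ∑ j, ∑ k, -Hk (Sum.swap j) (Sum.swap k) • (c (Sum.swap k) * c (Sum.swap j))
      = ∑ j, ∑ k, -Hk (Sum.swap j) k • (c k * c (Sum.swap j)) := by
        refine Finset.sum_congr rfl fun j _ => ?_
        exact Fintype.sum_equiv (Equiv.sumComm (Fin n) (Fin n)) _ _ (fun k => by simp)
    _ = ∑ j, ∑ k, -Hk j k • (c k * c j) :=
        Fintype.sum_equiv (Equiv.sumComm (Fin n) (Fin n)) _ _ (fun j => by simp)
    _ = ∑ j, ∑ k, Hk k j • (c k * c j) := by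
        refine Finset.sum_congr rfl fun j _ => Finset.sum_congr rfl fun k _ => ?_
        rw [hH j k, neg_neg]
    _ = ∑ k, ∑ j, Hk k j • (c k * c j) := Finset.sum_comm
    _ = quadForm n c Hk := rfl

end Ferm

section Ferm2
variable (n : ℕ) (c : Fin n ⊕ Fin n → Matrix (Fin (2^n)) (Fin (2^n)) ℂ)

lemma Xherm
    (hadj : ∀ j, (c j)ᴴ = c (Sum.swap j))
    (Hk : Matrix (Fin n ⊕ Fin n) (Fin n ⊕ Fin n) ℂ) (hanti : Hk = -Hkᵀ)
    (htilde : Emat n * Hk.map (starRingEnd ℂ) * Emat n = -Hk) :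
    (-((Complex.I / 2) • quadForm n c Hk))ᴴ = -(-((Complex.I / 2) • quadForm n c Hk)) := by
  have hQ := quad_herm n c hadj Hk hanti htilde
  have hs : star (Complex.I / 2) = -(Complex.I / 2) := by
    rw [Complex.star_def, map_div₀, Complex.conj_I, neg_div]
    norm_num [Complex.conj_ofNat]
  rw [Matrix.conjTranspose_neg, Matrix.conjTranspose_smul, hQ, hs, neg_smul]

lemma expX_conjTranspose
    (hadj : ∀ j, (c j)ᴴ = c (Sum.swap j))
    (Hk : Matrix (Fin n ⊕ Fin n) (Fin n ⊕ Fin n) ℂ) (hanti : Hk = -Hkᵀ)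
    (htilde : Emat n * Hk.map (starRingEnd ℂ) * Emat n = -Hk) :
    (exp (-((Complex.I / 2) • quadForm n c Hk)))ᴴ
      = exp ((Complex.I / 2) • quadForm n c Hk) := by
  rw [← Matrix.exp_conjTranspose, Xherm n c hadj Hk hanti htilde, neg_neg]

lemma expX_unitary_left
    (hadj : ∀ j, (c j)ᴴ = c (Sum.swap j))
    (Hk : Matrix (Fin n ⊕ Fin n) (Fin n ⊕ Fin n) ℂ) (hanti : Hk = -Hkᵀ)
    (htilde : Emat n * Hk.map (starRingEnd ℂ) * Emat n = -Hk) :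
    exp (-((Complex.I / 2) • quadForm n c Hk))
      * (exp (-((Complex.I / 2) • quadForm n c Hk)))ᴴ = 1 := by
  rw [expX_conjTranspose n c hadj Hk hanti htilde,
    ← Matrix.exp_add_of_commute (-((Complex.I / 2) • quadForm n c Hk)) ((Complex.I / 2) • quadForm n c Hk) (Commute.neg_left (Commute.refl _))]
  simp

lemma expX_unitary_right
    (hadj : ∀ j, (c j)ᴴ = c (Sum.swap j))
    (Hk : Matrix (Fin n ⊕ Fin n) (Fin n ⊕ Fin n) ℂ) (hanti : Hk = -Hkᵀ)
    (htilde : Emat n * Hk.map (starRingEnd ℂ) * Emat n = -Hk) :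
    (exp (-((Complex.I / 2) • quadForm n c Hk)))ᴴ
      * exp (-((Complex.I / 2) • quadForm n c Hk)) = 1 := by
  rw [expX_conjTranspose n c hadj Hk hanti htilde,
    ← Matrix.exp_add_of_commute ((Complex.I / 2) • quadForm n c Hk) (-((Complex.I / 2) • quadForm n c Hk)) (Commute.neg_right (Commute.refl _))]
  simp

lemma conj_mode
    (hadj : ∀ j, (c j)ᴴ = c (Sum.swap j))
    (hCAR : ∀ j k, c j * c k + c k * c j = Emat n j k • (1 : Matrix (Fin (2^n)) (Fin (2^n)) ℂ))
    (Hk : Matrix (Fin n ⊕ Fin n) (Fin n ⊕ Fin n) ℂ) (hanti : Hk = -Hkᵀ)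
    (htilde : Emat n * Hk.map (starRingEnd ℂ) * Emat n = -Hk)
    (j : Fin n ⊕ Fin n) :
    (exp (-((Complex.I / 2) • quadForm n c Hk)))ᴴ * c j
        * exp (-((Complex.I / 2) • quadForm n c Hk))
      = ∑ j', (exp (-(Complex.I • (Emat n * Hk)))) j j' • c j' := by
  have hH : ∀ a b, Hk a b = -Hk b a := by
    intro a b; conv_lhs => rw [hanti]
    simp
  set Q := quadForm n c Hk with hQdef
  set X := -((Complex.I / 2) • Q) with hXdef
  set B := -(Complex.I • (Emat n * Hk)) with hBdef
  have hUc : (exp X)ᴴ = exp (-X) := by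
    rw [← Matrix.exp_conjTranspose, Xherm n c hadj Hk hanti htilde]
  rw [hUc]
  -- bracket computation
  have hbr : ∀ a, c a * X - X * c a = ∑ a', B a a' • c a' := by
    intro a
    have h1 : c a * X - X * c a = (Complex.I / 2) • (Q * c a - c a * Q) := by
      rw [hXdef, mul_neg, neg_mul, sub_neg_eq_add, mul_smul_comm, smul_mul_assoc, smul_sub]
      abel
    rw [h1, quad_bracket n c hCAR Hk hanti a, Finset.smul_sum]
    refine Finset.sum_congr rfl fun a' _ => ?_
    rw [smul_smul]
    congr 1
    rw [hBdef]
    simp only [Matrix.neg_apply, Matrix.smul_apply, Matrix.mul_apply, smul_eq_mul]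
    have hlhs : Complex.I / 2 * (2 * ∑ b, Hk a' b * Emat n b a)
        = ∑ b, Complex.I * (Hk a' b * Emat n b a) := by
      rw [← mul_assoc, Finset.mul_sum]
      norm_num
    rw [hlhs, Finset.mul_sum, ← Finset.sum_neg_distrib]
    refine Finset.sum_congr rfl fun b _ => ?_
    rw [Emat_symm n a b, hH b a']
    ring
  -- now work with the l∞-operator norm
  have main : exp (-X) * c j * exp X = ∑ j', (exp B) j j' • c j' := by
    have hpow : ∀ (N : ℕ) (a : Fin n ⊕ Fin n),
        ((adRf X) ^ N) (c a) = ∑ a', ((B ^ N) a a') • c a' := by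
      intro N
      induction N with
      | zero =>
        intro a
        simp [Matrix.one_apply, ite_smul]
      | succ N ih =>
        intro a
        have hstep : ((adRf X) ^ (N+1)) (c a) = ((adRf X) ^ N) ((adRf X) (c a)) := by
          rw [pow_succ, ContinuousLinearMap.mul_apply]
        rw [hstep, adRf_apply, hbr a, map_sum]
        simp only [_root_.map_smul, ih, Finset.smul_sum, smul_smul]
        rw [Finset.sum_comm]
        refine Finset.sum_congr rfl fun a'' _ => ?_
        rw [← Finset.sum_smul]
        congr 1
        rw [pow_succ', Matrix.mul_apply]
    have h1 := hasSum_exp_apply (adRf X) (c j)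
    have h2 := hasSum_exp_entries B c j
    have h3 : exp (adRf X) (c j) = ∑ j', (exp B) j j' • c j' := by
      refine h1.unique ?_
      convert h2 using 1
      funext N
      exact congrArg _ (hpow N j)
    calc exp (-X) * c j * exp X = exp (adRf X) (c j) := (exp_adRf_apply X (c j)).symm
      _ = ∑ j', (exp B) j j' • c j' := h3
  exact main

lemma cTensor_succ (M : ℕ) (J : Fin (M+1) → Fin n ⊕ Fin n) :
    cTensor n (M+1) c J = c (J 0) * cTensor n M c (fun m => J m.succ) := by
  simp [cTensor, List.ofFn_succ]

lemma conj_tensor (Uk : Matrix (Fin (2^n)) (Fin (2^n)) ℂ)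
    (Ok : Matrix (Fin n ⊕ Fin n) (Fin n ⊕ Fin n) ℂ)
    (hUU : Uk * Ukᴴ = 1) (hUU' : Ukᴴ * Uk = 1)
    (hconj : ∀ j, Ukᴴ * c j * Uk = ∑ j', Ok j j' • c j')
    (M : ℕ) (J : Fin M → Fin n ⊕ Fin n) :
    Ukᴴ * cTensor n M c J * Uk
      = ∑ J', kronPow n M Ok J J' • cTensor n M c J' := by
  induction M with
  | zero =>
    simp [cTensor, kronPow, hUU', Finset.univ_unique]
  | succ M ih =>
    rw [cTensor_succ]
    have key : Ukᴴ * (c (J 0) * cTensor n M c (fun m => J m.succ)) * Uk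
        = (Ukᴴ * c (J 0) * Uk) * (Ukᴴ * cTensor n M c (fun m => J m.succ) * Uk) := by
      rw [show (Ukᴴ * c (J 0) * Uk) * (Ukᴴ * cTensor n M c (fun m => J m.succ) * Uk)
          = Ukᴴ * c (J 0) * (Uk * Ukᴴ) * cTensor n M c (fun m => J m.succ) * Uk by
        noncomm_ring, hUU]
      noncomm_ring
    rw [key, hconj, ih]
    rw [Finset.sum_mul_sum]
    rw [← Equiv.sum_comp (Fin.consEquiv (fun _ : Fin (M+1) => Fin n ⊕ Fin n))
      (fun J' => kronPow n (M+1) Ok J J' • cTensor n (M+1) c J'), Fintype.sum_prod_type]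
    refine Finset.sum_congr rfl fun a _ => Finset.sum_congr rfl fun J'' _ => ?_
    have h1 : (Fin.consEquiv (fun _ : Fin (M+1) => Fin n ⊕ Fin n)) (a, J'') = Fin.cons a J'' :=
      rfl
    rw [h1]
    have h2 : kronPow n (M+1) Ok J (Fin.cons a J'')
        = Ok (J 0) a * kronPow n M Ok (fun m => J m.succ) J'' := by
      rw [kronPow, Fin.prod_univ_succ]
      simp [kronPow]
    have h3 : cTensor n (M+1) c (Fin.cons a J'') = c a * cTensor n M c J'' := by
      rw [cTensor_succ]
      simp
    rw [h2, h3, smul_mul_smul_comm]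

end Ferm2

/-- Theorem, moment dynamics: for `ρ_t = e^{t𝓛}ρ₀` with Poisson-type GKSL
generator with unitary jumps `Uₖ = e^{-(i/2)𝔠ᵀHₖ𝔠}`, `Hₖ = -Hₖᵀ = -H̃ₖ`,
`⟨⊗ₘ𝔠⟩_t = e^{tΣₖλₖ(⊗ₘOₖ − I)}⟨⊗ₘ𝔠⟩₀` with `Oₖ = e^{-iEHₖ}`. -/
theorem statement10 (n M K : ℕ) (c : Fin n ⊕ Fin n → Matrix (Fin (2^n)) (Fin (2^n)) ℂ)
    (hadj : ∀ j, (c j)ᴴ = c (Sum.swap j))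
    (hCAR : ∀ j k, c j * c k + c k * c j = Emat n j k • (1 : Matrix (Fin (2^n)) (Fin (2^n)) ℂ))
    (lam : Fin K → ℝ) (hlam : ∀ k, 0 < lam k)
    (H : Fin K → Matrix (Fin n ⊕ Fin n) (Fin n ⊕ Fin n) ℂ)
    (hanti : ∀ k, H k = -(H k)ᵀ)
    (htilde : ∀ k, Emat n * (H k).map (starRingEnd ℂ) * Emat n = -(H k))
    (U : Fin K → Matrix (Fin (2^n)) (Fin (2^n)) ℂ)
    (hUdef : ∀ k, U k = NormedSpace.exp (-((Complex.I / 2) • quadForm n c (H k))))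
    (O : Fin K → Matrix (Fin n ⊕ Fin n) (Fin n ⊕ Fin n) ℂ)
    (hOdef : ∀ k, O k = NormedSpace.exp (-(Complex.I • (Emat n * H k))))
    (L : Matrix (Fin (2^n)) (Fin (2^n)) ℂ →L[ℂ] Matrix (Fin (2^n)) (Fin (2^n)) ℂ)
    (hL : ∀ ρ, L ρ = ∑ k, (lam k : ℂ) • (U k * ρ * (U k)ᴴ - ρ))
    (ρ₀ : Matrix (Fin (2^n)) (Fin (2^n)) ℂ)
    (hM : 1 ≤ M) (t : ℝ) (ht : 0 ≤ t) (J : Fin M → Fin n ⊕ Fin n) :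
    ((NormedSpace.exp ((t : ℂ) • L)) ρ₀ * cTensor n M c J).trace
      = ∑ J', (NormedSpace.exp ((t : ℂ) • ∑ k, (lam k : ℂ) • (kronPow n M (O k) - 1))) J J'
          * (ρ₀ * cTensor n M c J').trace := by
  classical
  have hUU : ∀ k, U k * (U k)ᴴ = 1 := by
    intro k; rw [hUdef k]; exact expX_unitary_left n c hadj (H k) (hanti k) (htilde k)
  have hUU' : ∀ k, (U k)ᴴ * U k = 1 := by
    intro k; rw [hUdef k]; exact expX_unitary_right n c hadj (H k) (hanti k) (htilde k)
  have hconj : ∀ k j, (U k)ᴴ * c j * U k = ∑ j', O k j j' • c j' := by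
    intro k j; rw [hUdef k, hOdef k]
    exact conj_mode n c hadj hCAR (H k) (hanti k) (htilde k) j
  have htens : ∀ k (J' : Fin M → Fin n ⊕ Fin n),
      (U k)ᴴ * cTensor n M c J' * U k
        = ∑ J'', kronPow n M (O k) J' J'' • cTensor n M c J'' :=
    fun k => conj_tensor n c (U k) (O k) (hUU k) (hUU' k) (hconj k) M
  have hΦex : ∃ Φ : Matrix (Fin (2^n)) (Fin (2^n)) ℂ →L[ℂ] ((Fin M → Fin n ⊕ Fin n) → ℂ),
      ∀ ρ J', Φ ρ J' = (ρ * cTensor n M c J').trace := by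
    refine ⟨LinearMap.toContinuousLinearMap
      { toFun := fun ρ => fun J' => (ρ * cTensor n M c J').trace
        map_add' := ?_, map_smul' := ?_ }, fun ρ J' => rfl⟩
    · intro ρ σ; funext J'; simp [Matrix.add_mul]
    · intro a ρ; funext J'; simp [Matrix.smul_mul]
  obtain ⟨Φ, hΦ⟩ := hΦex
  set Amat := ∑ k, (lam k : ℂ) • (kronPow n M (O k) - 1) with hAdef
  have hstep : ∀ ρ, Φ (L ρ) = matAct Amat (Φ ρ) := by
    intro ρ
    funext Jx
    rw [hΦ, hL, Finset.sum_mul, Matrix.trace_sum]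
    have hterm : ∀ k, ((lam k : ℂ) • (U k * ρ * (U k)ᴴ - ρ) * cTensor n M c Jx).trace
        = (lam k : ℂ) * ((∑ J', kronPow n M (O k) Jx J' * (ρ * cTensor n M c J').trace)
            - (ρ * cTensor n M c Jx).trace) := by
      intro k
      rw [Matrix.smul_mul, Matrix.trace_smul, smul_eq_mul]
      congr 1
      rw [Matrix.sub_mul, Matrix.trace_sub]
      congr 1
      have e1 : U k * ρ * (U k)ᴴ * cTensor n M c Jx
          = (U k * ρ) * ((U k)ᴴ * cTensor n M c Jx) := by rw [mul_assoc]
      rw [e1, Matrix.trace_mul_comm]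
      have e2 : ((U k)ᴴ * cTensor n M c Jx) * (U k * ρ)
          = ((U k)ᴴ * cTensor n M c Jx * U k) * ρ := by rw [← mul_assoc]
      rw [e2, Matrix.trace_mul_comm, htens k Jx, Finset.mul_sum, Matrix.trace_sum]
      refine Finset.sum_congr rfl fun J' _ => ?_
      rw [Matrix.mul_smul, Matrix.trace_smul, smul_eq_mul]
    rw [Finset.sum_congr rfl fun k _ => hterm k]
    -- RHS
    rw [matAct_apply]
    have hA : ∀ Jy, Amat Jx Jy
        = ∑ k, (lam k : ℂ) * (kronPow n M (O k) Jx Jy - (1 : Matrix _ _ ℂ) Jx Jy) := by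
      intro Jy
      rw [hAdef]
      simp [Matrix.sum_apply, Matrix.smul_apply, Matrix.sub_apply, smul_eq_mul]
    calc ∑ k, (lam k : ℂ) * ((∑ J', kronPow n M (O k) Jx J' * (ρ * cTensor n M c J').trace)
            - (ρ * cTensor n M c Jx).trace)
        = ∑ k, ∑ J', (lam k : ℂ)
            * ((kronPow n M (O k) Jx J' - (1 : Matrix _ _ ℂ) Jx J')
              * (ρ * cTensor n M c J').trace) := by
          refine Finset.sum_congr rfl fun k _ => ?_
          rw [← Finset.mul_sum]
          congr 1
          have : ∑ J', (ρ * cTensor n M c J').trace * (1 : Matrix _ _ ℂ) Jx J'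
              = (ρ * cTensor n M c Jx).trace := by
            simp [Matrix.one_apply, Finset.sum_ite_eq']
          rw [← this, ← Finset.sum_sub_distrib]
          refine Finset.sum_congr rfl fun J' _ => ?_
          ring
        _ = ∑ J', Amat Jx J' • Φ ρ J' := by
          rw [Finset.sum_comm]
          refine Finset.sum_congr rfl fun J' _ => ?_
          rw [hA J', hΦ, smul_eq_mul, Finset.sum_mul]
          exact Finset.sum_congr rfl fun k _ => by ring
  have hstep2 : ∀ ρ, Φ (((t : ℂ) • L) ρ) = (matAct ((t : ℂ) • Amat)) (Φ ρ) := by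
    intro ρ
    rw [ContinuousLinearMap.smul_apply, _root_.map_smul, hstep, matAct_smul,
      ContinuousLinearMap.smul_apply]
  have hfinal := exp_apply_intertwine Φ ((t : ℂ) • L) (matAct ((t : ℂ) • Amat)) hstep2 ρ₀
  have hexp := exp_matAct (V := ℂ) ((t : ℂ) • Amat)
  calc (exp ((t : ℂ) • L) ρ₀ * cTensor n M c J).trace
      = Φ (exp ((t : ℂ) • L) ρ₀) J := (hΦ _ J).symm
    _ = exp (matAct ((t : ℂ) • Amat)) (Φ ρ₀) J := by exact congrFun hfinal J
    _ = matAct (exp ((t : ℂ) • Amat)) (Φ ρ₀) J := by rw [hexp]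
    _ = ∑ J', exp ((t : ℂ) • Amat) J J' * (ρ₀ * cTensor n M c J').trace := by
        rw [matAct_apply]
        exact Finset.sum_congr rfl fun J' _ => by rw [hΦ, smul_eq_mul]
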